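/- Let F be a field of characteristic 5. For every permitted coloring of ∂Δ⁵, the alternating cocycle sum of the polynomial c(a,b,c,d,e) = e²+ce+4be+d²+3bd+2ad+c²+3bc+3ac+2b² vanishes: Σ_{i=1}^{6} (−1)^{i−1} c[u_i] = 0 in F, where u_i = {1,…,6}∖{i}. -/

import Mathlib

open Finset

/-- The 5×5 integer matrix 𝓡. -/
def Rmat : Matrix (Fin 5) (Fin 5) ℤ :=
  !![0, -2, 1, 1, -2;
     0, -1, 0, 1, -1;
     -1, 2, -2, 0, 1;
     -1, 3, -2, -1, 2;
     0, 1, -1, 0, 0]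

/-- The table of 2-columns ψ for a tetrahedron with (sorted) vertices indexed by `Fin 4`:
for indices a < c, the value of ψ on the edge joining the a-th and the c-th vertex. -/
def psiPair (F : Type*) [Field F] (a c : Fin 4) : F × F :=
  if a = 0 ∧ c = 1 then (-1, 1)
  else if a = 0 ∧ c = 2 then (2, -1)
  else if a = 0 ∧ c = 3 then (-1, 0)
  else if a = 1 ∧ c = 2 then (-1, 0)
  else if a = 1 ∧ c = 3 then (0, 1)
  else if a = 2 ∧ c = 3 then (1, -1)
  else (0, 0)

/-- ψ_{t,b} for a tetrahedron `t` (a 4-element subset of the vertex set) and an edge `b`: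
zero when `b ⊄ t`, and the corresponding table value otherwise. -/
def psi (F : Type*) [Field F] {V : Type*} [LinearOrder V]
    (t : Finset V) (ht : t.card = 4) (b : Finset V) : F × F :=
  ∑ a : Fin 4, ∑ c : Fin 4,
    if a < c ∧ b = {t.orderEmbOfFin ht a, t.orderEmbOfFin ht c} then psiPair F a c else 0

/-- The i-th vertex (in increasing order) of a pentachoron `u`. -/
def pentVert {V : Type*} [LinearOrder V] (u : Finset V) (hu : u.card = 5) (i : Fin 5) : V :=
  u.orderEmbOfFin hu i

/-- The i-th tetrahedral 3-face of a pentachoron `u`: it omits the i-th vertex. -/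
def pentFace {V : Type*} [LinearOrder V] (u : Finset V) (hu : u.card = 5) (i : Fin 5) :
    Finset V :=
  u.erase (pentVert u hu i)

/-- A coloring χ (assigning a pair (x_t, y_t) ∈ F × F to each tetrahedron) is permitted on a
pentachoron `u` if the column of y-values on its five 3-faces equals 𝓡 applied to the column
of x-values. -/
def PermittedOn {V : Type*} [LinearOrder V] {F : Type*} [Field F]
    (u : Finset V) (hu : u.card = 5) (χ : Finset V → F × F) : Prop :=
  ∀ i : Fin 5,
    (χ (pentFace u hu i)).2 = ∑ j : Fin 5, (Rmat i j : F) * (χ (pentFace u hu j)).1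

/-- The coloring assigning ψ_{t,b} to every tetrahedron `t`. -/
def Xi (F : Type*) [Field F] {V : Type*} [LinearOrder V] (b : Finset V) :
    Finset V → F × F :=
  fun t => if ht : t.card = 4 then psi F t ht b else 0


/-- A coloring of ∂Δ⁵ (vertex set `Fin 6`) is permitted if it is permitted on each of the six
pentachora, i.e., on every 5-element subset of the vertices. -/
def Permitted {F : Type*} [Field F] (χ : Finset (Fin 6) → F × F) : Prop :=
  ∀ (u : Finset (Fin 6)) (hu : u.card = 5), PermittedOn u hu χ

lemma card_erase6 (i : Fin 6) : ((univ : Finset (Fin 6)).erase i).card = 5 := by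
  rw [Finset.card_erase_of_mem (mem_univ i)]
  simp

/-- `xv F χ i j` is the x-value of the coloring χ on the j-th 3-face (the one omitting the
j-th smallest vertex) of the pentachoron u_i = {1,…,6} ∖ {i} of ∂Δ⁵; for the pentachoron
u_i this gives the substitutions a = xv i 0, b = xv i 1, c = xv i 2, d = xv i 3,
e = xv i 4. -/
def xv (F : Type*) [Field F] (χ : Finset (Fin 6) → F × F) (i : Fin 6) (j : Fin 5) : F :=
  (χ (pentFace ((univ : Finset (Fin 6)).erase i) (card_erase6 i) j)).1

/-- char 5: the alternating cocycle sum of e²+ce+4be+d²+3bd+2ad+c²+3bc+3ac+2b² over a permitted coloring of ∂Δ⁵ vanishes. -/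
theorem statement16 (F : Type*) [Field F] [CharP F 5]
    (χ : Finset (Fin 6) → F × F) (hχ : Permitted χ) :
    ∑ i : Fin 6, (-1 : F) ^ (i : ℕ) *
      (let a := xv F χ i 0; let b := xv F χ i 1; let c := xv F χ i 2;
       let d := xv F χ i 3; let e := xv F χ i 4;
       e^2 + c*e + 4*b*e + d^2 + 3*b*d + 2*a*d + c^2 + 3*b*c + 3*a*c + 2*b^2) = 0 := by
  have h5 : (5 : F) = 0 := by exact_mod_cast CharP.cast_eq_zero F 5
  have hu0 : ∀ j, pentFace ((univ : Finset (Fin 6)).erase 0) (card_erase6 0) j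
      = ((univ : Finset (Fin 6)).erase 0).erase (![1,2,3,4,5] j) := by
    intro j
    unfold pentFace pentVert
    rw [← Finset.orderEmbOfFin_unique (card_erase6 0) (f := fun j => (![1,2,3,4,5] : Fin 5 → Fin 6) j) (by decide) (by decide)]
  have hf00 : pentFace ((univ : Finset (Fin 6)).erase 0) (card_erase6 0) 0 = ({2,3,4,5} : Finset (Fin 6)) := by rw [hu0]; decide
  have hf01 : pentFace ((univ : Finset (Fin 6)).erase 0) (card_erase6 0) 1 = ({1,3,4,5} : Finset (Fin 6)) := by rw [hu0]; decide
  have hf02 : pentFace ((univ : Finset (Fin 6)).erase 0) (card_erase6 0) 2 = ({1,2,4,5} : Finset (Fin 6)) := by rw [hu0]; decide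
  have hf03 : pentFace ((univ : Finset (Fin 6)).erase 0) (card_erase6 0) 3 = ({1,2,3,5} : Finset (Fin 6)) := by rw [hu0]; decide
  have hf04 : pentFace ((univ : Finset (Fin 6)).erase 0) (card_erase6 0) 4 = ({1,2,3,4} : Finset (Fin 6)) := by rw [hu0]; decide
  have hu1 : ∀ j, pentFace ((univ : Finset (Fin 6)).erase 1) (card_erase6 1) j
      = ((univ : Finset (Fin 6)).erase 1).erase (![0,2,3,4,5] j) := by
    intro j
    unfold pentFace pentVert
    rw [← Finset.orderEmbOfFin_unique (card_erase6 1) (f := fun j => (![0,2,3,4,5] : Fin 5 → Fin 6) j) (by decide) (by decide)]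
  have hf10 : pentFace ((univ : Finset (Fin 6)).erase 1) (card_erase6 1) 0 = ({2,3,4,5} : Finset (Fin 6)) := by rw [hu1]; decide
  have hf11 : pentFace ((univ : Finset (Fin 6)).erase 1) (card_erase6 1) 1 = ({0,3,4,5} : Finset (Fin 6)) := by rw [hu1]; decide
  have hf12 : pentFace ((univ : Finset (Fin 6)).erase 1) (card_erase6 1) 2 = ({0,2,4,5} : Finset (Fin 6)) := by rw [hu1]; decide
  have hf13 : pentFace ((univ : Finset (Fin 6)).erase 1) (card_erase6 1) 3 = ({0,2,3,5} : Finset (Fin 6)) := by rw [hu1]; decide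
  have hf14 : pentFace ((univ : Finset (Fin 6)).erase 1) (card_erase6 1) 4 = ({0,2,3,4} : Finset (Fin 6)) := by rw [hu1]; decide
  have hu2 : ∀ j, pentFace ((univ : Finset (Fin 6)).erase 2) (card_erase6 2) j
      = ((univ : Finset (Fin 6)).erase 2).erase (![0,1,3,4,5] j) := by
    intro j
    unfold pentFace pentVert
    rw [← Finset.orderEmbOfFin_unique (card_erase6 2) (f := fun j => (![0,1,3,4,5] : Fin 5 → Fin 6) j) (by decide) (by decide)]
  have hf20 : pentFace ((univ : Finset (Fin 6)).erase 2) (card_erase6 2) 0 = ({1,3,4,5} : Finset (Fin 6)) := by rw [hu2]; decide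
  have hf21 : pentFace ((univ : Finset (Fin 6)).erase 2) (card_erase6 2) 1 = ({0,3,4,5} : Finset (Fin 6)) := by rw [hu2]; decide
  have hf22 : pentFace ((univ : Finset (Fin 6)).erase 2) (card_erase6 2) 2 = ({0,1,4,5} : Finset (Fin 6)) := by rw [hu2]; decide
  have hf23 : pentFace ((univ : Finset (Fin 6)).erase 2) (card_erase6 2) 3 = ({0,1,3,5} : Finset (Fin 6)) := by rw [hu2]; decide
  have hf24 : pentFace ((univ : Finset (Fin 6)).erase 2) (card_erase6 2) 4 = ({0,1,3,4} : Finset (Fin 6)) := by rw [hu2]; decide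
  have hu3 : ∀ j, pentFace ((univ : Finset (Fin 6)).erase 3) (card_erase6 3) j
      = ((univ : Finset (Fin 6)).erase 3).erase (![0,1,2,4,5] j) := by
    intro j
    unfold pentFace pentVert
    rw [← Finset.orderEmbOfFin_unique (card_erase6 3) (f := fun j => (![0,1,2,4,5] : Fin 5 → Fin 6) j) (by decide) (by decide)]
  have hf30 : pentFace ((univ : Finset (Fin 6)).erase 3) (card_erase6 3) 0 = ({1,2,4,5} : Finset (Fin 6)) := by rw [hu3]; decide
  have hf31 : pentFace ((univ : Finset (Fin 6)).erase 3) (card_erase6 3) 1 = ({0,2,4,5} : Finset (Fin 6)) := by rw [hu3]; decide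
  have hf32 : pentFace ((univ : Finset (Fin 6)).erase 3) (card_erase6 3) 2 = ({0,1,4,5} : Finset (Fin 6)) := by rw [hu3]; decide
  have hf33 : pentFace ((univ : Finset (Fin 6)).erase 3) (card_erase6 3) 3 = ({0,1,2,5} : Finset (Fin 6)) := by rw [hu3]; decide
  have hf34 : pentFace ((univ : Finset (Fin 6)).erase 3) (card_erase6 3) 4 = ({0,1,2,4} : Finset (Fin 6)) := by rw [hu3]; decide
  have hu4 : ∀ j, pentFace ((univ : Finset (Fin 6)).erase 4) (card_erase6 4) j
      = ((univ : Finset (Fin 6)).erase 4).erase (![0,1,2,3,5] j) := by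
    intro j
    unfold pentFace pentVert
    rw [← Finset.orderEmbOfFin_unique (card_erase6 4) (f := fun j => (![0,1,2,3,5] : Fin 5 → Fin 6) j) (by decide) (by decide)]
  have hf40 : pentFace ((univ : Finset (Fin 6)).erase 4) (card_erase6 4) 0 = ({1,2,3,5} : Finset (Fin 6)) := by rw [hu4]; decide
  have hf41 : pentFace ((univ : Finset (Fin 6)).erase 4) (card_erase6 4) 1 = ({0,2,3,5} : Finset (Fin 6)) := by rw [hu4]; decide
  have hf42 : pentFace ((univ : Finset (Fin 6)).erase 4) (card_erase6 4) 2 = ({0,1,3,5} : Finset (Fin 6)) := by rw [hu4]; decide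
  have hf43 : pentFace ((univ : Finset (Fin 6)).erase 4) (card_erase6 4) 3 = ({0,1,2,5} : Finset (Fin 6)) := by rw [hu4]; decide
  have hf44 : pentFace ((univ : Finset (Fin 6)).erase 4) (card_erase6 4) 4 = ({0,1,2,3} : Finset (Fin 6)) := by rw [hu4]; decide
  have hu5 : ∀ j, pentFace ((univ : Finset (Fin 6)).erase 5) (card_erase6 5) j
      = ((univ : Finset (Fin 6)).erase 5).erase (![0,1,2,3,4] j) := by
    intro j
    unfold pentFace pentVert
    rw [← Finset.orderEmbOfFin_unique (card_erase6 5) (f := fun j => (![0,1,2,3,4] : Fin 5 → Fin 6) j) (by decide) (by decide)]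
  have hf50 : pentFace ((univ : Finset (Fin 6)).erase 5) (card_erase6 5) 0 = ({1,2,3,4} : Finset (Fin 6)) := by rw [hu5]; decide
  have hf51 : pentFace ((univ : Finset (Fin 6)).erase 5) (card_erase6 5) 1 = ({0,2,3,4} : Finset (Fin 6)) := by rw [hu5]; decide
  have hf52 : pentFace ((univ : Finset (Fin 6)).erase 5) (card_erase6 5) 2 = ({0,1,3,4} : Finset (Fin 6)) := by rw [hu5]; decide
  have hf53 : pentFace ((univ : Finset (Fin 6)).erase 5) (card_erase6 5) 3 = ({0,1,2,4} : Finset (Fin 6)) := by rw [hu5]; decide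
  have hf54 : pentFace ((univ : Finset (Fin 6)).erase 5) (card_erase6 5) 4 = ({0,1,2,3} : Finset (Fin 6)) := by rw [hu5]; decide
  have e13 := hχ ((univ : Finset (Fin 6)).erase 1) (card_erase6 1) 3
  simp only [Fin.sum_univ_five, hf10, hf11, hf12, hf13, hf14, Rmat] at e13
  norm_num [Matrix.cons_val_zero, Matrix.cons_val_one, Matrix.head_cons, Matrix.cons_val_two, Matrix.tail_cons, Matrix.cons_val_three, Matrix.cons_val_four] at e13
  have e22 := hχ ((univ : Finset (Fin 6)).erase 2) (card_erase6 2) 2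
  simp only [Fin.sum_univ_five, hf20, hf21, hf22, hf23, hf24, Rmat] at e22
  norm_num [Matrix.cons_val_zero, Matrix.cons_val_one, Matrix.head_cons, Matrix.cons_val_two, Matrix.tail_cons, Matrix.cons_val_three, Matrix.cons_val_four] at e22
  have e23 := hχ ((univ : Finset (Fin 6)).erase 2) (card_erase6 2) 3
  simp only [Fin.sum_univ_five, hf20, hf21, hf22, hf23, hf24, Rmat] at e23
  norm_num [Matrix.cons_val_zero, Matrix.cons_val_one, Matrix.head_cons, Matrix.cons_val_two, Matrix.tail_cons, Matrix.cons_val_three, Matrix.cons_val_four] at e23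
  have e24 := hχ ((univ : Finset (Fin 6)).erase 2) (card_erase6 2) 4
  simp only [Fin.sum_univ_five, hf20, hf21, hf22, hf23, hf24, Rmat] at e24
  norm_num [Matrix.cons_val_zero, Matrix.cons_val_one, Matrix.head_cons, Matrix.cons_val_two, Matrix.tail_cons, Matrix.cons_val_three, Matrix.cons_val_four] at e24
  have e32 := hχ ((univ : Finset (Fin 6)).erase 3) (card_erase6 3) 2
  simp only [Fin.sum_univ_five, hf30, hf31, hf32, hf33, hf34, Rmat] at e32
  norm_num [Matrix.cons_val_zero, Matrix.cons_val_one, Matrix.head_cons, Matrix.cons_val_two, Matrix.tail_cons, Matrix.cons_val_three, Matrix.cons_val_four] at e32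
  have e33 := hχ ((univ : Finset (Fin 6)).erase 3) (card_erase6 3) 3
  simp only [Fin.sum_univ_five, hf30, hf31, hf32, hf33, hf34, Rmat] at e33
  norm_num [Matrix.cons_val_zero, Matrix.cons_val_one, Matrix.head_cons, Matrix.cons_val_two, Matrix.tail_cons, Matrix.cons_val_three, Matrix.cons_val_four] at e33
  have e34 := hχ ((univ : Finset (Fin 6)).erase 3) (card_erase6 3) 4
  simp only [Fin.sum_univ_five, hf30, hf31, hf32, hf33, hf34, Rmat] at e34
  norm_num [Matrix.cons_val_zero, Matrix.cons_val_one, Matrix.head_cons, Matrix.cons_val_two, Matrix.tail_cons, Matrix.cons_val_three, Matrix.cons_val_four] at e34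
  have e41 := hχ ((univ : Finset (Fin 6)).erase 4) (card_erase6 4) 1
  simp only [Fin.sum_univ_five, hf40, hf41, hf42, hf43, hf44, Rmat] at e41
  norm_num [Matrix.cons_val_zero, Matrix.cons_val_one, Matrix.head_cons, Matrix.cons_val_two, Matrix.tail_cons, Matrix.cons_val_three, Matrix.cons_val_four] at e41
  have e42 := hχ ((univ : Finset (Fin 6)).erase 4) (card_erase6 4) 2
  simp only [Fin.sum_univ_five, hf40, hf41, hf42, hf43, hf44, Rmat] at e42
  norm_num [Matrix.cons_val_zero, Matrix.cons_val_one, Matrix.head_cons, Matrix.cons_val_two, Matrix.tail_cons, Matrix.cons_val_three, Matrix.cons_val_four] at e42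
  have e43 := hχ ((univ : Finset (Fin 6)).erase 4) (card_erase6 4) 3
  simp only [Fin.sum_univ_five, hf40, hf41, hf42, hf43, hf44, Rmat] at e43
  norm_num [Matrix.cons_val_zero, Matrix.cons_val_one, Matrix.head_cons, Matrix.cons_val_two, Matrix.tail_cons, Matrix.cons_val_three, Matrix.cons_val_four] at e43
  have e52 := hχ ((univ : Finset (Fin 6)).erase 5) (card_erase6 5) 2
  simp only [Fin.sum_univ_five, hf50, hf51, hf52, hf53, hf54, Rmat] at e52
  norm_num [Matrix.cons_val_zero, Matrix.cons_val_one, Matrix.head_cons, Matrix.cons_val_two, Matrix.tail_cons, Matrix.cons_val_three, Matrix.cons_val_four] at e52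
  have e53 := hχ ((univ : Finset (Fin 6)).erase 5) (card_erase6 5) 3
  simp only [Fin.sum_univ_five, hf50, hf51, hf52, hf53, hf54, Rmat] at e53
  norm_num [Matrix.cons_val_zero, Matrix.cons_val_one, Matrix.head_cons, Matrix.cons_val_two, Matrix.tail_cons, Matrix.cons_val_three, Matrix.cons_val_four] at e53
  simp only [Fin.sum_univ_six, xv, hf00, hf01, hf02, hf03, hf04, hf10, hf11, hf12, hf13, hf14, hf20, hf21, hf22, hf23, hf24, hf30, hf31, hf32, hf33, hf34, hf40, hf41, hf42, hf43, hf44, hf50, hf51, hf52, hf53, hf54, show ((0 : Fin 6) : ℕ) = 0 from rfl, show ((1 : Fin 6) : ℕ) = 1 from rfl, show ((2 : Fin 6) : ℕ) = 2 from rfl, show ((3 : Fin 6) : ℕ) = 3 from rfl, show ((4 : Fin 6) : ℕ) = 4 from rfl, show ((5 : Fin 6) : ℕ) = 5 from rfl]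
  linear_combination (4 * (χ ({0,1,2,3} : Finset (Fin 6))).1 + 2 * (χ ({0,1,2,4} : Finset (Fin 6))).1 + 2 * (χ ({0,1,3,4} : Finset (Fin 6))).1 + 1 * (χ ({0,1,3,5} : Finset (Fin 6))).1 + 1 * (χ ({0,1,4,5} : Finset (Fin 6))).1 + 2 * (χ ({0,2,3,4} : Finset (Fin 6))).1 + 1 * (χ ({0,2,3,5} : Finset (Fin 6))).1 + 4 * (χ ({0,2,4,5} : Finset (Fin 6))).1 + 3 * (χ ({0,3,4,5} : Finset (Fin 6))).1 + 1 * (χ ({1,2,3,4} : Finset (Fin 6))).1 + 3 * (χ ({1,2,3,5} : Finset (Fin 6))).1 + 2 * (χ ({1,3,4,5} : Finset (Fin 6))).1) * e53 - (4 * (χ ({0,1,2,3} : Finset (Fin 6))).1 + 2 * (χ ({0,1,2,4} : Finset (Fin 6))).1 + 2 * (χ ({0,1,3,4} : Finset (Fin 6))).1 + 1 * (χ ({0,1,3,5} : Finset (Fin 6))).1 + 1 * (χ ({0,1,4,5} : Finset (Fin 6))).1 + 2 * (χ ({0,2,3,4} : Finset (Fin 6))).1 + 1 * (χ ({0,2,3,5}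 : Finset (Fin 6))).1 + 4 * (χ ({0,2,4,5} : Finset (Fin 6))).1 + 3 * (χ ({0,3,4,5} : Finset (Fin 6))).1 + 1 * (χ ({1,2,3,4} : Finset (Fin 6))).1 + 3 * (χ ({1,2,3,5} : Finset (Fin 6))).1 + 2 * (χ ({1,3,4,5} : Finset (Fin 6))).1) * e34 + (1 * (χ ({0,1,2,3} : Finset (Fin 6))).1 + 4 * (χ ({0,1,3,4} : Finset (Fin 6))).1 + 2 * (χ ({0,1,3,5} : Finset (Fin 6))).1 + 3 * (χ ({0,1,4,5} : Finset (Fin 6))).1 + 4 * (χ ({0,2,3,4} : Finset (Fin 6))).1 + 1 * (χ ({0,2,3,5} : Finset (Fin 6))).1 + 2 * (χ ({0,2,4,5} : Finset (Fin 6))).1 + 2 * (χ ({0,3,4,5} : Finset (Fin 6))).1 + 2 * (χ ({1,2,3,5} : Finset (Fin 6))).1 + 2 * (χ ({1,2,4,5} : Finset (Fin 6))).1 + 1 * (χ ({1,3,4,5} : Finset (Fin 6))).1) * e43 - (1 * (χ ({0,1,2,3} : Finset (Fin 6))).1 + 4 * (χ ({0,1,3,4} : Finset (Fin 6))).1 +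 2 * (χ ({0,1,3,5} : Finset (Fin 6))).1 + 3 * (χ ({0,1,4,5} : Finset (Fin 6))).1 + 4 * (χ ({0,2,3,4} : Finset (Fin 6))).1 + 1 * (χ ({0,2,3,5} : Finset (Fin 6))).1 + 2 * (χ ({0,2,4,5} : Finset (Fin 6))).1 + 2 * (χ ({0,3,4,5} : Finset (Fin 6))).1 + 2 * (χ ({1,2,3,5} : Finset (Fin 6))).1 + 2 * (χ ({1,2,4,5} : Finset (Fin 6))).1 + 1 * (χ ({1,3,4,5} : Finset (Fin 6))).1) * e33 + (1 * (χ ({0,1,2,3} : Finset (Fin 6))).1 + 1 * (χ ({0,1,2,4} : Finset (Fin 6))).1 + 1 * (χ ({0,1,3,4} : Finset (Fin 6))).1 + 1 * (χ ({0,1,3,5} : Finset (Fin 6))).1 + 1 * (χ ({0,1,4,5} : Finset (Fin 6))).1 + 1 * (χ ({0,2,3,4} : Finset (Fin 6))).1 + 2 * (χ ({0,2,4,5} : Finset (Fin 6))).1 + 1 * (χ ({0,3,4,5} : Finset (Fin 6))).1 + 4 * (χ ({1,2,3,5} : Finset (Fin 6))).1 + 1 * (χ ({1,3,4,5} : Finset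 (Fin 6))).1) * e52 - (1 * (χ ({0,1,2,3} : Finset (Fin 6))).1 + 1 * (χ ({0,1,2,4} : Finset (Fin 6))).1 + 1 * (χ ({0,1,3,4} : Finset (Fin 6))).1 + 1 * (χ ({0,1,3,5} : Finset (Fin 6))).1 + 1 * (χ ({0,1,4,5} : Finset (Fin 6))).1 + 1 * (χ ({0,2,3,4} : Finset (Fin 6))).1 + 2 * (χ ({0,2,4,5} : Finset (Fin 6))).1 + 1 * (χ ({0,3,4,5} : Finset (Fin 6))).1 + 4 * (χ ({1,2,3,5} : Finset (Fin 6))).1 + 1 * (χ ({1,3,4,5} : Finset (Fin 6))).1) * e24 + (4 * (χ ({0,1,2,3} : Finset (Fin 6))).1 + 2 * (χ ({0,1,3,4} : Finset (Fin 6))).1 + 3 * (χ ({0,1,3,5} : Finset (Fin 6))).1 + 1 * (χ ({0,1,4,5} : Finset (Fin 6))).1 + 2 * (χ ({0,2,3,4} : Finset (Fin 6))).1 + 3 * (χ ({0,2,3,5} : Finset (Fin 6))).1 + 4 * (χ ({0,2,4,5} : Finset (Fin 6))).1 + 4 * (χ ({0,3,4,5} : Finset (Fin 6))).1 + 3 *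 (χ ({1,2,3,4} : Finset (Fin 6))).1 + 4 * (χ ({1,2,3,5} : Finset (Fin 6))).1 + 3 * (χ ({1,2,4,5} : Finset (Fin 6))).1 + 3 * (χ ({1,3,4,5} : Finset (Fin 6))).1) * e42 - (4 * (χ ({0,1,2,3} : Finset (Fin 6))).1 + 2 * (χ ({0,1,3,4} : Finset (Fin 6))).1 + 3 * (χ ({0,1,3,5} : Finset (Fin 6))).1 + 1 * (χ ({0,1,4,5} : Finset (Fin 6))).1 + 2 * (χ ({0,2,3,4} : Finset (Fin 6))).1 + 3 * (χ ({0,2,3,5} : Finset (Fin 6))).1 + 4 * (χ ({0,2,4,5} : Finset (Fin 6))).1 + 4 * (χ ({0,3,4,5} : Finset (Fin 6))).1 + 3 * (χ ({1,2,3,4} : Finset (Fin 6))).1 + 4 * (χ ({1,2,3,5} : Finset (Fin 6))).1 + 3 * (χ ({1,2,4,5} : Finset (Fin 6))).1 + 3 * (χ ({1,3,4,5} : Finset (Fin 6))).1) * e23 + (1 * (χ ({0,1,2,3} : Finset (Fin 6))).1 + 4 * (χ ({0,1,2,4} : Finset (Fin 6))).1 + 3 * (χ ({0,2,3,5} : Finset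 (Fin 6))).1 + 1 * (χ ({0,2,4,5} : Finset (Fin 6))).1 + 1 * (χ ({0,3,4,5} : Finset (Fin 6))).1 + 1 * (χ ({1,2,3,4} : Finset (Fin 6))).1 + 2 * (χ ({1,2,3,5} : Finset (Fin 6))).1 + 3 * (χ ({1,2,4,5} : Finset (Fin 6))).1) * e32 - (1 * (χ ({0,1,2,3} : Finset (Fin 6))).1 + 4 * (χ ({0,1,2,4} : Finset (Fin 6))).1 + 3 * (χ ({0,2,3,5} : Finset (Fin 6))).1 + 1 * (χ ({0,2,4,5} : Finset (Fin 6))).1 + 1 * (χ ({0,3,4,5} : Finset (Fin 6))).1 + 1 * (χ ({1,2,3,4} : Finset (Fin 6))).1 + 2 * (χ ({1,2,3,5} : Finset (Fin 6))).1 + 3 * (χ ({1,2,4,5} : Finset (Fin 6))).1) * e22 + (2 * (χ ({0,2,3,5} : Finset (Fin 6))).1 + 3 * (χ ({0,2,4,5} : Finset (Fin 6))).1 + 3 * (χ ({1,2,3,5} : Finset (Fin 6))).1 + 2 * (χ ({1,2,4,5} : Finset (Fin 6))).1) * e41 - (2 * (χ ({0,2,3,5} : Finset (Fin 6))).1 +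 3 * (χ ({0,2,4,5} : Finset (Fin 6))).1 + 3 * (χ ({1,2,3,5} : Finset (Fin 6))).1 + 2 * (χ ({1,2,4,5} : Finset (Fin 6))).1) * e13 + ((3) * (χ ({0,1,2,3} : Finset (Fin 6))).1 * (χ ({0,1,2,3} : Finset (Fin 6))).1 + (-1) * (χ ({0,1,2,3} : Finset (Fin 6))).1 * (χ ({0,1,3,4} : Finset (Fin 6))).1 + (1) * (χ ({0,1,2,3} : Finset (Fin 6))).1 * (χ ({0,1,3,5} : Finset (Fin 6))).1 + (5) * (χ ({0,1,2,3} : Finset (Fin 6))).1 * (χ ({0,1,4,5} : Finset (Fin 6))).1 + (5) * (χ ({0,1,2,3} : Finset (Fin 6))).1 * (χ ({0,2,3,4} : Finset (Fin 6))).1 + (4) * (χ ({0,1,2,3} : Finset (Fin 6))).1 * (χ ({0,2,3,5} : Finset (Fin 6))).1 + (2) * (χ ({0,1,2,3} : Finset (Fin 6))).1 * (χ ({0,2,4,5} : Finset (Fin 6))).1 + (2) * (χ ({0,1,2,3} : Finset (Fin 6))).1 * (χ ({1,2,3,5} : Finset (Fin 6))).1 + (1) * (χ ({0,1,2,3} :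 Finset (Fin 6))).1 * (χ ({1,2,4,5} : Finset (Fin 6))).1 + (3) * (χ ({0,1,2,3} : Finset (Fin 6))).1 * (χ ({1,3,4,5} : Finset (Fin 6))).1 + (-4) * (χ ({0,1,2,4} : Finset (Fin 6))).1 * (χ ({0,1,3,4} : Finset (Fin 6))).1 + (-1) * (χ ({0,1,2,4} : Finset (Fin 6))).1 * (χ ({0,1,3,5} : Finset (Fin 6))).1 + (-1) * (χ ({0,1,2,4} : Finset (Fin 6))).1 * (χ ({0,1,4,5} : Finset (Fin 6))).1 + (-1) * (χ ({0,1,2,4} : Finset (Fin 6))).1 * (χ ({0,2,3,4} : Finset (Fin 6))).1 + (-1) * (χ ({0,1,2,4} : Finset (Fin 6))).1 * (χ ({0,2,4,5} : Finset (Fin 6))).1 + (-3) * (χ ({0,1,2,4} : Finset (Fin 6))).1 * (χ ({0,3,4,5} : Finset (Fin 6))).1 + (-1) * (χ ({0,1,2,4} : Finset (Fin 6))).1 * (χ ({1,2,3,4} : Finset (Fin 6))).1 + (-1) * (χ ({0,1,2,4} : Finset (Fin 6))).1 * (χ ({1,2,3,5} : Finset (Fin 6))).1 + (-1) * (χ ({0,1,2,4}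 : Finset (Fin 6))).1 * (χ ({1,2,4,5} : Finset (Fin 6))).1 + (1) * (χ ({0,1,2,5} : Finset (Fin 6))).1 * (χ ({0,2,3,5} : Finset (Fin 6))).1 + (1) * (χ ({0,1,2,5} : Finset (Fin 6))).1 * (χ ({1,2,3,5} : Finset (Fin 6))).1 + (-2) * (χ ({0,1,3,4} : Finset (Fin 6))).1 * (χ ({0,1,3,4} : Finset (Fin 6))).1 + (-4) * (χ ({0,1,3,4} : Finset (Fin 6))).1 * (χ ({0,1,3,5} : Finset (Fin 6))).1 + (2) * (χ ({0,1,3,4} : Finset (Fin 6))).1 * (χ ({0,1,4,5} : Finset (Fin 6))).1 + (-1) * (χ ({0,1,3,4} : Finset (Fin 6))).1 * (χ ({0,2,3,4} : Finset (Fin 6))).1 + (1) * (χ ({0,1,3,4} : Finset (Fin 6))).1 * (χ ({0,2,3,5} : Finset (Fin 6))).1 + (-7) * (χ ({0,1,3,4} : Finset (Fin 6))).1 * (χ ({0,2,4,5} : Finset (Fin 6))).1 + (-4) * (χ ({0,1,3,4} : Finset (Fin 6))).1 * (χ ({0,3,4,5} : Finset (Fin 6))).1 + (-3) * (χ ({0,1,3,4}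 : Finset (Fin 6))).1 * (χ ({1,2,3,4} : Finset (Fin 6))).1 + (-6) * (χ ({0,1,3,4} : Finset (Fin 6))).1 * (χ ({1,2,3,5} : Finset (Fin 6))).1 + (-1) * (χ ({0,1,3,4} : Finset (Fin 6))).1 * (χ ({1,2,4,5} : Finset (Fin 6))).1 + (-2) * (χ ({0,1,3,4} : Finset (Fin 6))).1 * (χ ({1,3,4,5} : Finset (Fin 6))).1 + (-1) * (χ ({0,1,3,5} : Finset (Fin 6))).1 * (χ ({0,1,3,5} : Finset (Fin 6))).1 + (1) * (χ ({0,1,3,5} : Finset (Fin 6))).1 * (χ ({0,1,4,5} : Finset (Fin 6))).1 + (-1) * (χ ({0,1,3,5} : Finset (Fin 6))).1 * (χ ({0,2,3,4} : Finset (Fin 6))).1 + (2) * (χ ({0,1,3,5} : Finset (Fin 6))).1 * (χ ({0,2,3,5} : Finset (Fin 6))).1 + (-3) * (χ ({0,1,3,5} : Finset (Fin 6))).1 * (χ ({0,2,4,5} : Finset (Fin 6))).1 + (-3) * (χ ({0,1,3,5} : Finset (Fin 6))).1 * (χ ({0,3,4,5} : Finset (Fin 6))).1 + (-1) * (χ ({0,1,3,5}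 : Finset (Fin 6))).1 * (χ ({1,2,3,4} : Finset (Fin 6))).1 + (-2) * (χ ({0,1,3,5} : Finset (Fin 6))).1 * (χ ({1,2,3,5} : Finset (Fin 6))).1 + (-1) * (χ ({0,1,3,5} : Finset (Fin 6))).1 * (χ ({1,2,4,5} : Finset (Fin 6))).1 + (2) * (χ ({0,1,4,5} : Finset (Fin 6))).1 * (χ ({0,1,4,5} : Finset (Fin 6))).1 + (4) * (χ ({0,1,4,5} : Finset (Fin 6))).1 * (χ ({0,2,3,4} : Finset (Fin 6))).1 + (4) * (χ ({0,1,4,5} : Finset (Fin 6))).1 * (χ ({0,2,3,5} : Finset (Fin 6))).1 + (1) * (χ ({0,1,4,5} : Finset (Fin 6))).1 * (χ ({0,2,4,5} : Finset (Fin 6))).1 + (3) * (χ ({0,1,4,5} : Finset (Fin 6))).1 * (χ ({0,3,4,5} : Finset (Fin 6))).1 + (1) * (χ ({0,1,4,5} : Finset (Fin 6))).1 * (χ ({1,2,3,4} : Finset (Fin 6))).1 + (3) * (χ ({0,1,4,5} : Finset (Fin 6))).1 * (χ ({1,2,3,5} : Finset (Fin 6))).1 + (2) * (χ ({0,1,4,5}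 : Finset (Fin 6))).1 * (χ ({1,2,4,5} : Finset (Fin 6))).1 + (3) * (χ ({0,1,4,5} : Finset (Fin 6))).1 * (χ ({1,3,4,5} : Finset (Fin 6))).1 + (1) * (χ ({0,2,3,4} : Finset (Fin 6))).1 * (χ ({0,2,3,4} : Finset (Fin 6))).1 + (3) * (χ ({0,2,3,4} : Finset (Fin 6))).1 * (χ ({0,2,3,5} : Finset (Fin 6))).1 + (-1) * (χ ({0,2,3,4} : Finset (Fin 6))).1 * (χ ({0,2,4,5} : Finset (Fin 6))).1 + (1) * (χ ({0,2,3,4} : Finset (Fin 6))).1 * (χ ({1,2,3,5} : Finset (Fin 6))).1 + (2) * (χ ({0,2,3,4} : Finset (Fin 6))).1 * (χ ({1,3,4,5} : Finset (Fin 6))).1 + (2) * (χ ({0,2,3,5} : Finset (Fin 6))).1 * (χ ({0,2,3,5} : Finset (Fin 6))).1 + (4) * (χ ({0,2,3,5} : Finset (Fin 6))).1 * (χ ({0,2,4,5} : Finset (Fin 6))).1 + (-2) * (χ ({0,2,3,5} : Finset (Fin 6))).1 * (χ ({0,3,4,5} : Finset (Fin 6))).1 + (1) * (χ ({0,2,3,5}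 : Finset (Fin 6))).1 * (χ ({1,2,3,4} : Finset (Fin 6))).1 + (2) * (χ ({0,2,3,5} : Finset (Fin 6))).1 * (χ ({1,2,3,5} : Finset (Fin 6))).1 + (2) * (χ ({0,2,3,5} : Finset (Fin 6))).1 * (χ ({1,2,4,5} : Finset (Fin 6))).1 + (3) * (χ ({0,2,3,5} : Finset (Fin 6))).1 * (χ ({1,3,4,5} : Finset (Fin 6))).1 + (-1) * (χ ({0,2,4,5} : Finset (Fin 6))).1 * (χ ({0,2,4,5} : Finset (Fin 6))).1 + (-7) * (χ ({0,2,4,5} : Finset (Fin 6))).1 * (χ ({0,3,4,5} : Finset (Fin 6))).1 + (-1) * (χ ({0,2,4,5} : Finset (Fin 6))).1 * (χ ({1,2,3,4} : Finset (Fin 6))).1 + (-1) * (χ ({0,2,4,5} : Finset (Fin 6))).1 * (χ ({1,2,3,5} : Finset (Fin 6))).1 + (1) * (χ ({0,2,4,5} : Finset (Fin 6))).1 * (χ ({1,2,4,5} : Finset (Fin 6))).1 + (-3) * (χ ({0,3,4,5} : Finset (Fin 6))).1 * (χ ({0,3,4,5} : Finset (Fin 6))).1 + (-3) * (χ ({0,3,4,5}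 : Finset (Fin 6))).1 * (χ ({1,2,3,4} : Finset (Fin 6))).1 + (-7) * (χ ({0,3,4,5} : Finset (Fin 6))).1 * (χ ({1,2,3,5} : Finset (Fin 6))).1 + (-4) * (χ ({0,3,4,5} : Finset (Fin 6))).1 * (χ ({1,2,4,5} : Finset (Fin 6))).1 + (-1) * (χ ({0,3,4,5} : Finset (Fin 6))).1 * (χ ({1,3,4,5} : Finset (Fin 6))).1 + (-2) * (χ ({1,2,3,4} : Finset (Fin 6))).1 * (χ ({1,2,3,5} : Finset (Fin 6))).1 + (1) * (χ ({1,2,3,4} : Finset (Fin 6))).1 * (χ ({1,3,4,5} : Finset (Fin 6))).1 + (-1) * (χ ({1,2,3,5} : Finset (Fin 6))).1 * (χ ({1,2,3,5} : Finset (Fin 6))).1 + (-1) * (χ ({1,2,3,5} : Finset (Fin 6))).1 * (χ ({1,2,4,5} : Finset (Fin 6))).1 + (1) * (χ ({1,2,3,5} : Finset (Fin 6))).1 * (χ ({1,3,4,5} : Finset (Fin 6))).1 + (1) * (χ ({1,2,3,5} : Finset (Fin 6))).1 * (χ ({2,3,4,5} : Finset (Fin 6))).1 + (2) * (χ ({1,2,4,5}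 : Finset (Fin 6))).1 * (χ ({1,3,4,5} : Finset (Fin 6))).1 + (1) * (χ ({1,2,4,5} : Finset (Fin 6))).1 * (χ ({2,3,4,5} : Finset (Fin 6))).1 + (1) * (χ ({1,3,4,5} : Finset (Fin 6))).1 * (χ ({1,3,4,5} : Finset (Fin 6))).1) * h5
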